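/- seq-Phragmén satisfies weak support monotonicity without population increase: if a seq-Phragmén winning committee W for election E contains nonempty G, and a voter i with A_i ∩ G = ∅ changes her ballot to A_i ∪ G, then some seq-Phragmén winning committee of the new election intersects G; and if all winning committees of E contain G, then all winning committees of the new election intersect G. -/
import Mathlib


open Finset

variable {C : Type*} [Fintype C] [DecidableEq C]

/-- The seq-Phragmén load that candidate `c` would get, given voter loads `x`:
`(1 + Σ_{i : c ∈ A_i} x_i) / |{i : c ∈ A_i}|`. -/
def phrCandLoad {V : Type*} [Fintype V] (A : V → Finset C) (x : V → ℚ) (c : C) : ℚ :=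
  (1 + ∑ i ∈ univ.filter fun i => c ∈ A i, x i) /
    ((univ.filter fun i : V => c ∈ A i).card : ℚ)

/-- The possible states (committee, voter loads) of seq-Phragmén after `j`
iterations: at each iteration an approved, non-elected candidate of minimal
candidate load is elected, and the loads of its approvers are updated. -/
def seqPhragmenStates {V : Type*} [Fintype V] (A : V → Finset C) :
    ℕ → Set (Finset C × (V → ℚ))
  | 0 => {(∅, fun _ => 0)}
  | j + 1 => {p | ∃ q ∈ seqPhragmenStates A j, ∃ w ∉ q.1,
      (univ.filter fun i : V => w ∈ A i).Nonempty ∧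
      (∀ c ∉ q.1, (univ.filter fun i : V => c ∈ A i).Nonempty →
        phrCandLoad A q.2 w ≤ phrCandLoad A q.2 c) ∧
      p = (insert w q.1, fun i => if w ∈ A i then phrCandLoad A q.2 w else q.2 i)}

/-- `W` is a possible output of seq-Phragmén after `k` iterations. -/
def isSeqPhragmenWinner {V : Type*} [Fintype V] (A : V → Finset C) (k : ℕ)
    (W : Finset C) : Prop :=
  ∃ x : V → ℚ, (W, x) ∈ seqPhragmenStates A k

/-- monotonicity of candidate load in voter loads -/
lemma phrCandLoad_mono {V : Type*} [Fintype V] (A : V → Finset C) {x y : V → ℚ}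
    (hxy : ∀ v, x v ≤ y v) (c : C) :
    phrCandLoad A x c ≤ phrCandLoad A y c := by
  unfold phrCandLoad
  rcases (univ.filter fun i : V => c ∈ A i).eq_empty_or_nonempty with h | h
  · simp [h]
  · have hc : (0:ℚ) < ((univ.filter fun i : V => c ∈ A i).card : ℚ) := by
      exact_mod_cast card_pos.mpr h
    gcongr
    exact hxy _

/-- the main invariant of seq-Phragmén states -/
lemma seqPhragmen_invariant {V : Type*} [Fintype V] (A : V → Finset C) :
    ∀ j, ∀ p ∈ seqPhragmenStates A j,
      p.1.card = j ∧
      (∀ w ∈ p.1, (univ.filter fun v : V => w ∈ A v).Nonempty) ∧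
      (∀ c ∉ p.1, (univ.filter fun v : V => c ∈ A v).Nonempty →
        ∀ v, p.2 v ≤ phrCandLoad A p.2 c) := by
  intro j
  induction j with
  | zero =>
    rintro p hp
    simp only [seqPhragmenStates, Set.mem_singleton_iff] at hp
    subst hp
    refine ⟨by simp, by simp, ?_⟩
    intro c _ hc v
    have hc' : (0:ℚ) < ((univ.filter fun v : V => c ∈ A v).card : ℚ) := by
      exact_mod_cast card_pos.mpr hc
    simp only [phrCandLoad]
    positivity
  | succ j ih =>
    rintro p ⟨q, hq, w, hw, hwne, hmin, rfl⟩
    obtain ⟨hcard, hmem, hload⟩ := ih q hq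
    have hs : ∀ v, q.2 v ≤ phrCandLoad A q.2 w := hload w hw hwne
    have hx' : ∀ v, q.2 v ≤ (fun v => if w ∈ A v then phrCandLoad A q.2 w else q.2 v) v := by
      intro v; dsimp only; split
      · exact hs v
      · exact le_rfl
    refine ⟨by simp [card_insert_of_notMem hw, hcard], ?_, ?_⟩
    · intro c hc
      rcases mem_insert.mp hc with rfl | hc
      · exact hwne
      · exact hmem c hc
    · intro c hc hcne v
      have hcq : c ∉ q.1 := fun h => hc (mem_insert_of_mem h)
      have h1 : phrCandLoad A q.2 w ≤ phrCandLoad A q.2 c := hmin c hcq hcne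
      have h2 : phrCandLoad A q.2 c ≤
          phrCandLoad A (fun v => if w ∈ A v then phrCandLoad A q.2 w else q.2 v) c :=
        phrCandLoad_mono A hx' c
      dsimp only
      split
      · exact h1.trans h2
      · exact (hs v).trans (h1.trans h2)


section Aux
variable {V : Type*} [Fintype V] [DecidableEq V]
variable {A : V → Finset C} {G : Finset C} {i : V}

lemma mem_update_iff {c : C} (hc : c ∉ G) (v : V) :
    c ∈ Function.update A i (A i ∪ G) v ↔ c ∈ A v := by
  rw [Function.update_apply]
  split
  · next h => subst h; simp [Finset.mem_union, hc]
  · rfl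

lemma filter_update_eq {c : C} (hc : c ∉ G) :
    (univ.filter fun v : V => c ∈ Function.update A i (A i ∪ G) v)
      = univ.filter fun v : V => c ∈ A v := by
  ext v; simp [mem_update_iff hc]

lemma filter_update_G (hiG : A i ∩ G = ∅) {g : C} (hg : g ∈ G) :
    (univ.filter fun v : V => g ∈ Function.update A i (A i ∪ G) v)
      = insert i (univ.filter fun v : V => g ∈ A v) := by
  ext v
  simp only [mem_filter, mem_univ, true_and, mem_insert, Function.update_apply]
  split
  · next h => subst h; simp [Finset.mem_union, hg]
  · next h => simp [h]

lemma notMem_filter_self (hiG : A i ∩ G = ∅) {g : C} (hg : g ∈ G) :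
    i ∉ (univ.filter fun v : V => g ∈ A v) := by
  simp only [mem_filter, mem_univ, true_and]
  intro h
  have : g ∈ A i ∩ G := Finset.mem_inter.mpr ⟨h, hg⟩
  simp [hiG] at this

lemma load_update_eq {c : C} (hc : c ∉ G) (x : V → ℚ) :
    phrCandLoad (Function.update A i (A i ∪ G)) x c = phrCandLoad A x c := by
  unfold phrCandLoad
  rw [filter_update_eq hc]

lemma load_update_G (hiG : A i ∩ G = ∅) {g : C} (hg : g ∈ G) (x : V → ℚ) :
    phrCandLoad (Function.update A i (A i ∪ G)) x g
      = (1 + (x i + ∑ v ∈ univ.filter fun v : V => g ∈ A v, x v)) /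
          (((univ.filter fun v : V => g ∈ A v).card : ℚ) + 1) := by
  unfold phrCandLoad
  rw [filter_update_G hiG hg, sum_insert (notMem_filter_self hiG hg),
    card_insert_of_notMem (notMem_filter_self hiG hg)]
  push_cast
  ring_nf

lemma arith_iff {n S t : ℚ} (hn : 1 ≤ n) :
    (1 + (t + S)) / (n + 1) ≤ (1 + S) / n ↔ t ≤ (1 + S) / n := by
  rw [div_le_div_iff₀ (by linarith) (by linarith), le_div_iff₀ (by linarith)]
  constructor <;> intro h <;> nlinarith

lemma arith_iff2 {n S t : ℚ} (hn : 1 ≤ n) :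
    t ≤ (1 + (t + S)) / (n + 1) ↔ t ≤ (1 + S) / n := by
  rw [le_div_iff₀ (by linarith), le_div_iff₀ (by linarith)]
  constructor <;> intro h <;> nlinarith

/-- If voter `i`'s load is at most the new load of `g`, then the new load of `g`
is at most the old load of `g`. -/
lemma new_load_le_old (hiG : A i ∩ G = ∅) {g : C} (hg : g ∈ G)
    (hne : (univ.filter fun v : V => g ∈ A v).Nonempty) (x : V → ℚ)
    (h : x i ≤ phrCandLoad (Function.update A i (A i ∪ G)) x g) :
    phrCandLoad (Function.update A i (A i ∪ G)) x g ≤ phrCandLoad A x g := by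
  have hn : (1:ℚ) ≤ ((univ.filter fun v : V => g ∈ A v).card : ℚ) := by
    exact_mod_cast card_pos.mpr hne
  rw [load_update_G hiG hg] at h ⊢
  unfold phrCandLoad
  rw [arith_iff hn]
  exact (arith_iff2 hn).mp h

/-- If voter `i`'s load is at most the old load of `g`, then the new load of `g`
is at most the old load of `g`. -/
lemma new_load_le_old' (hiG : A i ∩ G = ∅) {g : C} (hg : g ∈ G)
    (hne : (univ.filter fun v : V => g ∈ A v).Nonempty) (x : V → ℚ)
    (h : x i ≤ phrCandLoad A x g) :
    phrCandLoad (Function.update A i (A i ∪ G)) x g ≤ phrCandLoad A x g := by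
  have hn : (1:ℚ) ≤ ((univ.filter fun v : V => g ∈ A v).card : ℚ) := by
    exact_mod_cast card_pos.mpr hne
  rw [load_update_G hiG hg]
  unfold phrCandLoad at h ⊢
  rw [arith_iff hn]
  exact h

end Aux

section Main
variable {V : Type*} [Fintype V] [DecidableEq V]
variable {A : V → Finset C} {G : Finset C} {i : V}

/-- A run of the modified election avoiding `G` is a run of the original election. -/
lemma transfer_run (hiG : A i ∩ G = ∅) :
    ∀ j (W : Finset C) (x : V → ℚ),
      (W, x) ∈ seqPhragmenStates (Function.update A i (A i ∪ G)) j → W ∩ G = ∅ →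
      (W, x) ∈ seqPhragmenStates A j := by
  intro j
  induction j with
  | zero => intro W x h _; simpa [seqPhragmenStates] using h
  | succ j ih =>
    rintro W x ⟨q, hq, w, hw, hwne, hmin, heq⟩ hdis
    rw [Prod.ext_iff] at heq
    obtain ⟨hW, hx⟩ := heq
    simp only at hW hx
    have hwG : w ∉ G := by
      intro h
      have : w ∈ W ∩ G := mem_inter.mpr ⟨hW ▸ mem_insert_self w q.1, h⟩
      simp [hdis] at this
    have hq1 : q.1 ∩ G = ∅ := by
      rw [eq_empty_iff_forall_notMem]
      intro a ha
      rw [mem_inter] at ha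
      have : a ∈ W ∩ G := mem_inter.mpr ⟨hW ▸ mem_insert_of_mem ha.1, ha.2⟩
      simp [hdis] at this
    have hqA : q ∈ seqPhragmenStates A j := by
      have := ih q.1 q.2 (by rwa [Prod.mk.eta]) hq1
      rwa [Prod.mk.eta] at this
    have hinv := (seqPhragmen_invariant (Function.update A i (A i ∪ G)) j q hq).2.2
    refine ⟨q, hqA, w, hw, ?_, ?_, ?_⟩
    · rw [← filter_update_eq hwG (A := A) (i := i)]
      exact hwne
    · intro c hc hcne
      by_cases hcG : c ∈ G
      · have hnew_ne : (univ.filter fun v : V => c ∈ Function.update A i (A i ∪ G) v).Nonempty := by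
          rw [filter_update_G hiG hcG]
          exact insert_nonempty _ _
        have h1 := hmin c hc hnew_ne
        have hxi := hinv c hc hnew_ne i
        have h2 := new_load_le_old hiG hcG hcne q.2 hxi
        calc phrCandLoad A q.2 w
            = phrCandLoad (Function.update A i (A i ∪ G)) q.2 w := (load_update_eq hwG q.2).symm
          _ ≤ phrCandLoad (Function.update A i (A i ∪ G)) q.2 c := h1
          _ ≤ phrCandLoad A q.2 c := h2
      · rw [← load_update_eq hcG q.2, ← load_update_eq hwG q.2]
        refine hmin c hc ?_
        rw [filter_update_eq hcG]
        exact hcne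
    · rw [Prod.ext_iff]
      refine ⟨hW, ?_⟩
      rw [hx]
      funext v
      simp only [mem_update_iff hwG, load_update_eq hwG]

/-- Any run can be extended as long as there is a supply of approved candidates. -/
lemma extend_run (B : V → Finset C) (T : Finset C)
    (hT : ∀ c ∈ T, (univ.filter fun v : V => c ∈ B v).Nonempty) :
    ∀ m j (p : Finset C × (V → ℚ)), p ∈ seqPhragmenStates B j → j + m ≤ T.card →
      ∃ p' ∈ seqPhragmenStates B (j + m), p.1 ⊆ p'.1 := by
  intro m
  induction m with
  | zero => intro j p hp _; exact ⟨p, hp, subset_rfl⟩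
  | succ m ih =>
    intro j p hp hjm
    have hcard := (seqPhragmen_invariant B j p hp).1
    have hns : ¬ T ⊆ p.1 := fun h => by have := card_le_card h; omega
    obtain ⟨c, hcT, hcp⟩ := not_subset.mp hns
    classical
    have hEne : (univ.filter (fun d : C => d ∉ p.1 ∧
        (univ.filter fun v : V => d ∈ B v).Nonempty)).Nonempty :=
      ⟨c, by simp [hcp, hT c hcT]⟩
    obtain ⟨w, hwE, hwmin⟩ := exists_min_image _ (phrCandLoad B p.2) hEne
    simp only [mem_filter, mem_univ, true_and] at hwE
    have hstep : (insert w p.1, fun v => if w ∈ B v then phrCandLoad B p.2 w else p.2 v)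
        ∈ seqPhragmenStates B (j + 1) := by
      refine ⟨p, hp, w, hwE.1, hwE.2, ?_, rfl⟩
      intro d hd hdne
      exact hwmin d (by simp [hd, hdne])
    obtain ⟨p', hp', hsub⟩ := ih (j + 1) _ hstep (by omega)
    refine ⟨p', ?_, (subset_insert w p.1).trans hsub⟩
    rwa [show j + (m + 1) = (j + 1) + m by omega]

/-- Either a run of the original election avoiding `G` is also a run of the modified
election, or some run of the modified election elects a member of `G`. -/
lemma divert_run (hiG : A i ∩ G = ∅) (hGne : G.Nonempty) :
    ∀ j (p : Finset C × (V → ℚ)), p ∈ seqPhragmenStates A j →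
      (p.1 ∩ G = ∅ ∧ p ∈ seqPhragmenStates (Function.update A i (A i ∪ G)) j) ∨
      (∃ j' ≤ j, ∃ p' ∈ seqPhragmenStates (Function.update A i (A i ∪ G)) j',
        (p'.1 ∩ G).Nonempty) := by
  intro j
  induction j with
  | zero =>
    rintro p hp
    left
    simp only [seqPhragmenStates, Set.mem_singleton_iff] at hp
    subst hp
    exact ⟨by simp, by simp [seqPhragmenStates]⟩
  | succ j ih =>
    rintro p ⟨q, hq, w, hw, hwne, hmin, rfl⟩
    rcases ih q hq with ⟨hq1, hq2⟩ | ⟨j', hj', p', hp', hne⟩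
    · have hinvA := (seqPhragmen_invariant A j q hq).2.2
      by_cases hcase : w ∉ G ∧ ∀ g ∈ G, phrCandLoad (Function.update A i (A i ∪ G)) q.2 w ≤
          phrCandLoad (Function.update A i (A i ∪ G)) q.2 g
      · left
        obtain ⟨hwG, hall⟩ := hcase
        constructor
        · rw [eq_empty_iff_forall_notMem]
          intro a ha
          simp only [mem_inter, mem_insert] at ha
          rcases ha.1 with rfl | haq
          · exact hwG ha.2
          · have : a ∈ q.1 ∩ G := mem_inter.mpr ⟨haq, ha.2⟩
            simp [hq1] at this
        · refine ⟨q, hq2, w, hw, ?_, ?_, ?_⟩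
          · rw [filter_update_eq hwG]
            exact hwne
          · intro c hc hcne
            by_cases hcG : c ∈ G
            · exact hall c hcG
            · rw [load_update_eq hcG, load_update_eq hwG]
              refine hmin c hc ?_
              rw [← filter_update_eq hcG (A := A) (i := i)]
              exact hcne
          · rw [Prod.ext_iff]
            refine ⟨rfl, ?_⟩
            funext v
            simp only [mem_update_iff hwG, load_update_eq hwG]
      · right
        obtain ⟨g, hgG, hgmin⟩ := exists_min_image G
          (phrCandLoad (Function.update A i (A i ∪ G)) q.2) hGne
        have hkey : phrCandLoad (Function.update A i (A i ∪ G)) q.2 g ≤ phrCandLoad A q.2 w := by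
          by_cases hwG : w ∈ G
          · have hxi : q.2 i ≤ phrCandLoad A q.2 w := hinvA w hw hwne i
            exact (hgmin w hwG).trans (new_load_le_old' hiG hwG hwne q.2 hxi)
          · push_neg at hcase
            obtain ⟨g0, hg0, hl⟩ := hcase hwG
            have := (hgmin g0 hg0).trans hl.le
            rwa [load_update_eq hwG] at this
        have hgq : g ∉ q.1 := by
          intro h
          have : g ∈ q.1 ∩ G := mem_inter.mpr ⟨h, hgG⟩
          simp [hq1] at this
        refine ⟨j + 1, le_refl _,
          (insert g q.1, fun v => if g ∈ Function.update A i (A i ∪ G) v then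
            phrCandLoad (Function.update A i (A i ∪ G)) q.2 g else q.2 v),
          ⟨q, hq2, g, hgq, ?_, ?_, rfl⟩, ?_⟩
        · rw [filter_update_G hiG hgG]
          exact insert_nonempty _ _
        · intro c hc hcne
          by_cases hcG : c ∈ G
          · exact hgmin c hcG
          · rw [load_update_eq hcG]
            refine hkey.trans (hmin c hc ?_)
            rw [← filter_update_eq hcG (A := A) (i := i)]
            exact hcne
        · exact ⟨g, mem_inter.mpr ⟨mem_insert_self g q.1, hgG⟩⟩
    · exact Or.inr ⟨j', hj'.trans (Nat.le_succ j), p', hp', hne⟩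

end Main

/-- seq-Phragmén satisfies weak support monotonicity without population increase. -/
theorem seqphragmen_weak_SMWOPI {V : Type*} [Fintype V] [DecidableEq V]
    (A : V → Finset C) (k : ℕ) (hk : 1 ≤ k) (hkC : k ≤ Fintype.card C)
    (G : Finset C) (hG : G.Nonempty) (hGk : G.card ≤ k)
    (i : V) (hiG : A i ∩ G = ∅)
    (W : Finset C) (hW : isSeqPhragmenWinner A k W) (hGW : G ⊆ W) :
    (∃ W' : Finset C, isSeqPhragmenWinner (Function.update A i (A i ∪ G)) k W' ∧
        (W' ∩ G).Nonempty) ∧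
    ((∀ W₀ : Finset C, isSeqPhragmenWinner A k W₀ → G ⊆ W₀) →
      ∀ W' : Finset C, isSeqPhragmenWinner (Function.update A i (A i ∪ G)) k W' →
        (W' ∩ G).Nonempty) := by
  
  classical
  obtain ⟨x, hx⟩ := hW
  have hWcard : W.card = k := (seqPhragmen_invariant A k (W, x) hx).1
  have hWmem := (seqPhragmen_invariant A k (W, x) hx).2.1
  have hsub : ∀ v, A v ⊆ Function.update A i (A i ∪ G) v := by
    intro v
    rw [Function.update_apply]
    split
    · next h => subst h; exact subset_union_left
    · exact subset_rfl
  have hT : ∀ c ∈ W, (univ.filter fun v : V => c ∈ Function.update A i (A i ∪ G) v).Nonempty := by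
    intro c hc
    obtain ⟨v, hv⟩ := hWmem c hc
    simp only [mem_filter, mem_univ, true_and] at hv ⊢
    exact ⟨v, by simpa using hsub v (by simpa using hv)⟩
  constructor
  · rcases divert_run hiG hG k (W, x) hx with ⟨hdis, _⟩ | ⟨j', hj', p', hp', hne⟩
    · obtain ⟨g, hg⟩ := hG
      have : g ∈ W ∩ G := mem_inter.mpr ⟨hGW hg, hg⟩
      simp only at hdis
      simp [hdis] at this
    · obtain ⟨p'', hp'', hsub'⟩ := extend_run (Function.update A i (A i ∪ G)) W hT
        (k - j') j' p' hp' (by omega)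
      have hp''' : p'' ∈ seqPhragmenStates (Function.update A i (A i ∪ G)) k := by
        rwa [show j' + (k - j') = k by omega] at hp''
      exact ⟨p''.1, ⟨p''.2, by rwa [Prod.mk.eta]⟩,
        hne.mono (inter_subset_inter hsub' subset_rfl)⟩
  · rintro hall W' ⟨x', hx'⟩
    by_contra hcon
    rw [not_nonempty_iff_eq_empty] at hcon
    have hold := transfer_run hiG k W' x' hx' hcon
    have hsubG := hall W' ⟨x', hold⟩
    obtain ⟨g, hg⟩ := hG
    have : g ∈ W' ∩ G := mem_inter.mpr ⟨hsubG hg, hg⟩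
    simp [hcon] at this
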